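/- If ℓ < d, then there do not exist quadratic forms Q₁,…,Q_ℓ on ℝ^d such that the map v ↦ (Q₁(v),…,Q_ℓ(v)) is injective on pairs {v, −v}; i.e., there exist v, w ∈ ℝ^d with v ≠ ±w but Q_i(v) = Q_i(w) for all i. -/

import Mathlib

open Matrix

/-- If ℓ < d, then any ℓ quadratic forms on ℝ^d fail to be jointly injective on
pairs {v, −v}: there exist v, w with v ≠ ±w but Q_i(v) = Q_i(w) for all i. -/
theorem forms_not_injective_of_few {d ℓ : ℕ} (h : ℓ < d)
    (Q : Fin ℓ → Matrix (Fin d) (Fin d) ℝ) (hQ : ∀ i, (Q i).transpose = Q i) :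
    ∃ v w : Fin d → ℝ, v ≠ w ∧ v ≠ -w ∧ ∀ i, v ⬝ᵥ (Q i *ᵥ v) = w ⬝ᵥ (Q i *ᵥ w) := by
  have hd : 0 < d := lt_of_le_of_lt (Nat.zero_le _) h
  set e : Fin d → ℝ := fun _ => 1 with he
  have he0 : e ≠ 0 := by
    intro h0
    have := congrFun h0 ⟨0, hd⟩
    simp [he] at this
  -- the linear map x ↦ (e ⬝ Q_i x)_i given by matrix with rows e ᵥ* Q i
  set M : Matrix (Fin ℓ) (Fin d) ℝ := Matrix.of (fun i => e ᵥ* Q i) with hM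
  have hker : LinearMap.ker M.mulVecLin ≠ ⊥ := by
    apply LinearMap.ker_ne_bot_of_finrank_lt (K := ℝ)
    simpa using h
  obtain ⟨x, hx0, hxne⟩ := (Submodule.ne_bot_iff _).mp hker
  have hx : ∀ i, e ⬝ᵥ (Q i *ᵥ x) = 0 := by
    intro i
    have := congrFun hx0 i
    simpa [hM, Matrix.mulVecLin_apply, Matrix.mulVec,
      Matrix.dotProduct_mulVec] using congrFun hx0 i
  have hxe : ∀ i, x ⬝ᵥ (Q i *ᵥ e) = 0 := by
    intro i
    have : x ⬝ᵥ (Q i *ᵥ e) = e ⬝ᵥ (Q i *ᵥ x) := by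
      conv_lhs => rw [← hQ i, Matrix.mulVec_transpose]
      rw [Matrix.dotProduct_mulVec, dotProduct_comm]
    rw [this, hx i]
  refine ⟨e + x, e - x, ?_, ?_, ?_⟩
  · intro hvw
    apply hxne
    have : (2 : ℝ) • x = 0 := by
      have := sub_eq_zero.mpr hvw
      funext j
      have hj := congrFun this j
      simp at hj ⊢
      linarith
    simpa using smul_eq_zero.mp this |>.resolve_left (by norm_num)
  · intro hvw
    apply he0
    have : (2 : ℝ) • e = 0 := by
      funext j
      have hj := congrFun hvw j
      simp at hj ⊢
      linarith
    simpa using smul_eq_zero.mp this |>.resolve_left (by norm_num)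
  · intro i
    have expand : ∀ a b : Fin d → ℝ,
        (a + b) ⬝ᵥ (Q i *ᵥ (a + b)) =
          a ⬝ᵥ (Q i *ᵥ a) + a ⬝ᵥ (Q i *ᵥ b) + b ⬝ᵥ (Q i *ᵥ a) + b ⬝ᵥ (Q i *ᵥ b) := by
      intro a b
      simp [Matrix.mulVec_add, dotProduct_add, add_dotProduct]
      ring
    have h1 := expand e x
    have h2 := expand e (-x)
    have hsub : e - x = e + (-x) := by ring
    rw [hsub, h1, h2]
    simp [hx i, hxe i, Matrix.mulVec_neg, dotProduct_neg, neg_dotProduct]
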